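/- Fix n ≥ 2 and let A be a saturated class of morphisms of simplicial sets with the right cancellation property for monomorphisms which contains the left cone inclusions c_m for all 2 ≤ m < n. Then the canonical inclusion k_n : C_n → Λ[n,0] belongs to A. -/

import Mathlib

open CategoryTheory CategoryTheory.GrothendieckTopology CategoryTheory.Limits Simplicial SSet Opposite

noncomputable section

namespace BousfieldPaper

/-! ## Basic lifting-property classes of simplicial sets -/

/-- A Kan fibration: a map with the right lifting property against all horn inclusions. -/
def KanFibration {S T : SSet.{0}} (p : S ⟶ T) : Prop :=
  ∀ (n : ℕ) (i : Fin (n + 2)), HasLiftingProperty (Λ[n + 1, i].ι) p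

/-- An acyclic (trivial) Kan fibration: a map with the right lifting property against
all boundary inclusions. -/
def TrivialKanFibration {S T : SSet.{0}} (p : S ⟶ T) : Prop :=
  ∀ n : ℕ, HasLiftingProperty (∂Δ[n].ι) p

/-- The class of maps with the right lifting property against every map in `T`. -/
def rlpOf {C : Type*} [Category C] (T : MorphismProperty C) : MorphismProperty C :=
  fun _ _ p => ∀ ⦃A B : C⦄ (i : A ⟶ B), T i → HasLiftingProperty i p

/-- The class of maps with the left lifting property against every map in `T`. -/
def llpOf {C : Type*} [Category C] (T : MorphismProperty C) : MorphismProperty C :=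
  fun _ _ i => ∀ ⦃S T' : C⦄ (p : S ⟶ T'), T p → HasLiftingProperty i p

/-- The saturation `llp(rlp(S))` of a class of maps. -/
def saturationOf {C : Type*} [Category C] (S : MorphismProperty C) : MorphismProperty C :=
  llpOf (rlpOf S)

/-- The class of all horn inclusions (up to isomorphism of arrows). -/
def HornClass : MorphismProperty SSet.{0} := fun _ _ f =>
  ∃ (n : ℕ) (i : Fin (n + 2)), Nonempty (Arrow.mk f ≅ Arrow.mk (Λ[n + 1, i].ι))

/-- The class of left horn inclusions `Λ[n,0] → Δ[n]`, `n ≥ 2` (up to isomorphism of arrows). -/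
def LeftHornClass : MorphismProperty SSet.{0} := fun _ _ f =>
  ∃ n : ℕ, 2 ≤ n ∧ Nonempty (Arrow.mk f ≅ Arrow.mk (Λ[n, 0].ι))

/-- Anodyne maps: the saturation of the class of horn inclusions. -/
def Anodyne : MorphismProperty SSet.{0} := saturationOf HornClass

/-- A weak homotopy equivalence of simplicial sets (in the Kan--Quillen sense):
a map admitting a factorization as an anodyne map followed by an acyclic Kan fibration. -/
def WeakHomotopyEquivalence {S T : SSet.{0}} (f : S ⟶ T) : Prop :=
  ∃ (Z : SSet.{0}) (i : S ⟶ Z) (p : Z ⟶ T),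
    Anodyne i ∧ TrivialKanFibration p ∧ i ≫ p = f

/-! ## Saturated classes -/

/-- `f` is a retract of `g` in the arrow category. -/
def IsRetractOf {C : Type*} [Category C] {X Y X' Y' : C} (f : X ⟶ Y) (g : X' ⟶ Y') : Prop :=
  ∃ (i : Arrow.mk f ⟶ Arrow.mk g) (r : Arrow.mk g ⟶ Arrow.mk f), i ≫ r = 𝟙 _

/-- The inclusion functor of the subposet `{x | x < j}` of `J`. -/
def iioFunctor {J : Type} [Preorder J] (j : J) : Set.Iio j ⥤ J :=
  Monotone.functor (f := fun x => (x : J)) (fun _ _ h => h)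

/-- The cocone on the restriction of `F : J ⥤ C` to `{x | x < j}` with apex `F.obj j`. -/
def coconeBelow {J : Type} [Preorder J] {C : Type*} [Category C]
    (F : J ⥤ C) (j : J) : Cocone (iioFunctor j ⋙ F) where
  pt := F.obj j
  ι :=
    { app := fun x => F.map (homOfLE (le_of_lt x.2))
      naturality := fun x y g => by
        dsimp [iioFunctor, Monotone.functor]
        rw [← F.map_comp, Category.comp_id]
        congr 1 }

/-- A class of morphisms of simplicial sets is *saturated* (weakly saturated) if it is closed
under pushouts (cobase change), retracts and transfinite compositions. -/
structure IsSaturated (A : MorphismProperty SSet.{0}) : Prop where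
  pushout : ∀ ⦃X Y X' Y' : SSet.{0}⦄ (f : X ⟶ Y) (u : X ⟶ X') (v : Y ⟶ Y') (f' : X' ⟶ Y'),
    IsPushout f u v f' → A f → A f'
  retract : ∀ ⦃X Y X' Y' : SSet.{0}⦄ (f : X ⟶ Y) (g : X' ⟶ Y'),
    IsRetractOf f g → A g → A f
  transfinite : ∀ (J : Type) (_ : LinearOrder J) (_ : SuccOrder J) (_ : OrderBot J)
    (_ : WellFoundedLT J) (F : J ⥤ SSet.{0}) (c : Cocone F) (_ : IsColimit c),
    (∀ j : J, ¬IsMax j → A (F.map (homOfLE (Order.le_succ j)))) →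
    (∀ j : J, Order.IsSuccLimit j → Nonempty (IsColimit (coconeBelow F j))) →
    A (c.ι.app ⊥)

/-- Right cancellation property for monomorphisms. -/
def RightCancel (A : MorphismProperty SSet.{0}) : Prop :=
  ∀ ⦃X Y Z : SSet.{0}⦄ (u : X ⟶ Y) (v : Y ⟶ Z),
    Mono u → Mono v → A (u ≫ v) → A u → A v

/-- Left cancellation property for monomorphisms. -/
def LeftCancel (A : MorphismProperty SSet.{0}) : Prop :=
  ∀ ⦃X Y Z : SSet.{0}⦄ (u : X ⟶ Y) (v : Y ⟶ Z),
    Mono u → Mono v → A (u ≫ v) → A v → A u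

/-- 3-for-2 for monomorphisms: both left and right cancellation. -/
def ThreeForTwo (A : MorphismProperty SSet.{0}) : Prop :=
  RightCancel A ∧ LeftCancel A

/-! ## The left cone, the spine, and related subcomplexes of the standard simplex -/

/-- The left cone `C n ⊆ Δ[n]`: the union of the images of the initial edges `0 → i`. -/
def coneSub (n : ℕ) : Subfunctor Δ[n] where
  obj m := {α | ∃ i : ℕ, 1 ≤ i ∧ i ≤ n ∧
    ∀ j, (stdSimplex.asOrderHom α j : ℕ) = 0 ∨ (stdSimplex.asOrderHom α j : ℕ) = i}
  map := by
    rintro m m' g α ⟨i, hi1, hin, h⟩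
    exact ⟨i, hi1, hin, fun j => h _⟩

/-- The spine `Sp n ⊆ Δ[n]`: the union of the images of the edges `i → i+1`. -/
def spineSub (n : ℕ) : Subfunctor Δ[n] where
  obj m := {α | ∃ i : ℕ, i + 1 ≤ n ∧
    ∀ j, (stdSimplex.asOrderHom α j : ℕ) = i ∨ (stdSimplex.asOrderHom α j : ℕ) = i + 1}
  map := by
    rintro m m' g α ⟨i, hi, h⟩
    exact ⟨i, hi, fun j => h _⟩

/-- The union `(SpC) n ⊆ Δ[n]` of the images of the `2`-simplices `{0, i, i+1}`, `0 < i < n`. -/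
def spcSub (n : ℕ) : Subfunctor Δ[n] where
  obj m := {α | ∃ i : ℕ, 0 < i ∧ i + 1 ≤ n ∧
    ∀ j, (stdSimplex.asOrderHom α j : ℕ) = 0 ∨ (stdSimplex.asOrderHom α j : ℕ) = i ∨ (stdSimplex.asOrderHom α j : ℕ) = i + 1}
  map := by
    rintro m m' g α ⟨i, h₀, h₁, h⟩
    exact ⟨i, h₀, h₁, fun j => h _⟩

/-- The canonical inclusion `k n : C n → Λ[n, 0]` of the left cone into the left horn. -/
def coneToHorn (n : ℕ) (hn : 2 ≤ n) : ((coneSub n).toFunctor : SSet.{0}) ⟶ Λ[n, 0] where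
  app m := ↾fun α => by
    refine ⟨α.1, ?_⟩
    obtain ⟨i, hi1, hin, h⟩ := α.2
    intro hu
    rw [Set.eq_univ_iff_forall] at hu
    obtain ⟨kv, hkv0, hkvi, hkvlt⟩ : ∃ kv : ℕ, kv ≠ 0 ∧ kv ≠ i ∧ kv < n + 1 := by
      rcases eq_or_ne i 1 with hc | hc
      · exact ⟨2, by omega, by omega, by omega⟩
      · exact ⟨1, by omega, by omega, by omega⟩
    rcases hu ⟨kv, hkvlt⟩ with hr | h0
    · obtain ⟨j, hj⟩ := hr
      have hval := congrArg Fin.val hj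
      rcases h j with h' | h' <;> simp_all
    · have := congrArg Fin.val (Set.mem_singleton_iff.1 h0)
      simp_all

/-- The nerve `IΔ^n` of the free groupoid (codiscrete groupoid) on `{0, …, n}`:
its `m`-simplices are all (not necessarily monotone) functions `Fin (m+1) → Fin (n+1)`. -/
def IDelta (n : ℕ) : SSet.{0} where
  obj m := Fin (m.unop.len + 1) → Fin (n + 1)
  map f := ↾fun α => α ∘ f.unop.toOrderHom

/-- The canonical inclusion `Δ[n] → IΔ^n`. -/
def iDeltaIncl (n : ℕ) : (Δ[n] : SSet.{0}) ⟶ IDelta n where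
  app m := ↾fun α => ⇑(stdSimplex.asOrderHom α)

/-- The vertex `k : Δ[0] → IΔ^n`. -/
def iDeltaVertex (n : ℕ) (k : Fin (n + 1)) : (Δ[0] : SSet.{0}) ⟶ IDelta n where
  app m := ↾fun _ => fun _ => k


/-! ## Bisimplicial sets, the box product and the slash construction -/

/-- Bisimplicial sets: presheaves of sets on `Δ × Δ`. -/
abbrev BSSet : Type 1 := (SimplexCategory × SimplexCategory)ᵒᵖ ⥤ Type

/-- The box product `A □ B` of two simplicial sets: `(A □ B)_{n,m} = A_n × B_m`. -/
def box (A B : SSet.{0}) : BSSet where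
  obj nm := A.obj (op nm.unop.1) × B.obj (op nm.unop.2)
  map f := ↾fun p => ⟨A.map f.unop.1.op p.1, B.map f.unop.2.op p.2⟩

/-- The box product, functorially in its second variable. -/
def boxFunctor (A : SSet.{0}) : SSet.{0} ⥤ BSSet where
  obj B := box A B
  map g :=
    { app := fun nm => ↾fun p => ⟨p.1, g.app _ p.2⟩
      naturality := fun nm nm' f => by
        ext p
        exact Prod.ext rfl (NatTrans.naturality_apply g f.unop.2.op _) }

/-- The box product is natural in its first variable. -/
def boxHomLeft {A A' : SSet.{0}} (f : A ⟶ A') (B : SSet.{0}) :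
    (boxFunctor A).obj B ⟶ (boxFunctor A').obj B where
  app nm := ↾fun p => ⟨f.app _ p.1, p.2⟩
  naturality nm nm' g := by
    ext p
    exact Prod.ext (NatTrans.naturality_apply f g.unop.1.op _) rfl

lemma boxHomLeft_natural {A A' : SSet.{0}} (f : A ⟶ A') {B B' : SSet.{0}} (g : B ⟶ B') :
    (boxFunctor A).map g ≫ boxHomLeft f B' = boxHomLeft f B ≫ (boxFunctor A').map g := rfl

/-- The simplicial set `A \ X` with `m`-simplices the bisimplicial maps `A □ Δ[m] → X`. -/
def slash (A : SSet.{0}) (X : BSSet) : SSet.{0} :=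
  SSet.stdSimplex.op ⋙ ((boxFunctor A).op ⋙ yoneda.obj X)

/-- Functoriality (contravariance) of `A \ X` in `A`. -/
def slashMap {A A' : SSet.{0}} (f : A ⟶ A') (X : BSSet) : slash A' X ⟶ slash A X :=
  Functor.whiskerLeft SSet.stdSimplex.op
    (Functor.whiskerRight (NatTrans.op
      { app := fun B => boxHomLeft f B
        naturality := fun _ _ g => (boxHomLeft_natural f g).symm }) (yoneda.obj X))

lemma slashMap_id (A : SSet.{0}) (X : BSSet) : slashMap (𝟙 A) X = 𝟙 (slash A X) := rfl

lemma slashMap_comp {A A' A'' : SSet.{0}} (f : A ⟶ A') (g : A' ⟶ A'') (X : BSSet) :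
    slashMap (f ≫ g) X = slashMap g X ≫ slashMap f X := rfl


/-! ## Columns, Reedy fibrancy, Segal and Bousfield maps -/

/-- The `n`-th column `X_n := Δ[n] \ X` of a bisimplicial set. -/
def col (n : ℕ) (X : BSSet) : SSet.{0} := slash Δ[n] X

/-- The face map `d_i : X_{n+1} → X_n` between columns. -/
def colδ {n : ℕ} (i : Fin (n + 2)) (X : BSSet) : col (n + 1) X ⟶ col n X :=
  slashMap (SSet.stdSimplex.map (SimplexCategory.δ i)) X

/-- The degeneracy map `s_i : X_n → X_{n+1}` between columns. -/
def colσ {n : ℕ} (i : Fin (n + 1)) (X : BSSet) : col n X ⟶ col (n + 1) X :=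
  slashMap (SSet.stdSimplex.map (SimplexCategory.σ i)) X

/-- A bisimplicial set is `v`-fibrant (Reedy fibrant) if `f \ X` is a Kan fibration for
every monomorphism `f` of simplicial sets. -/
def VFibrant (X : BSSet) : Prop :=
  ∀ ⦃A B : SSet.{0}⦄ (f : A ⟶ B), Mono f → KanFibration (slashMap f X)

/-- The `n`-th Bousfield map `β_n = c_n \ X : X_n → C_n \ X`. -/
def bousfieldMap (n : ℕ) (X : BSSet) : col n X ⟶ slash (coneSub n).toFunctor X :=
  slashMap (coneSub n).ι X

/-- The `n`-th Segal map `ξ_n = sp_n \ X : X_n → Sp_n \ X`. -/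
def segalMap (n : ℕ) (X : BSSet) : col n X ⟶ slash (spineSub n).toFunctor X :=
  slashMap (spineSub n).ι X

/-- A Bousfield-Segal space: a `v`-fibrant bisimplicial set whose Bousfield maps `β_n`,
`n ≥ 2`, are weak homotopy equivalences. -/
def IsBSegal (X : BSSet) : Prop :=
  VFibrant X ∧ ∀ n : ℕ, 2 ≤ n → WeakHomotopyEquivalence (bousfieldMap n X)

/-- A Segal space: a `v`-fibrant bisimplicial set whose Segal maps `ξ_n`,
`n ≥ 2`, are weak homotopy equivalences. -/
def IsSegal (X : BSSet) : Prop :=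
  VFibrant X ∧ ∀ n : ℕ, 2 ≤ n → WeakHomotopyEquivalence (segalMap n X)

/-- The map `IΔ^1 \ X → X_0` induced by the vertex `{0} : Δ[0] → IΔ^1`. -/
def completenessMap (X : BSSet) : slash (IDelta 1) X ⟶ col 0 X :=
  slashMap (iDeltaVertex 1 0) X

/-- A complete Bousfield-Segal space. -/
def IsCompleteBSegal (X : BSSet) : Prop :=
  IsBSegal X ∧ WeakHomotopyEquivalence (completenessMap X)

/-- A bisimplicial set is homotopically constant if every map of the simplex category
induces a weak homotopy equivalence between the corresponding columns. -/
def HomotopicallyConstant (X : BSSet) : Prop :=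
  ∀ ⦃a b : SimplexCategory⦄ (f : a ⟶ b),
    WeakHomotopyEquivalence (slashMap (SSet.stdSimplex.map f) X)

/-! ## Vertices, edges and the fraction operation -/

/-- The vertices of a simplicial set. -/
def vert (S : SSet.{0}) : Type := S.obj (op (SimplexCategory.mk 0))

/-- Two vertices of a simplicial set lie in the same connected component, i.e. they have
equal classes in `π₀`. -/
def hSim (S : SSet.{0}) (a b : vert S) : Prop :=
  Relation.EqvGen (fun v w : vert S => ∃ e : S.obj (op (SimplexCategory.mk 1)),
    SimplicialObject.δ S 1 e = v ∧ SimplicialObject.δ S 0 e = w) a b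

/-- The edge `0 → i` of the left cone `C n`. -/
def coneEdge (n : ℕ) (i : Fin (n + 1)) (hi : i ≠ 0) :
    (Δ[1] : SSet.{0}) ⟶ (coneSub n).toFunctor where
  app m := ↾fun β => by
    refine ⟨(SSet.stdSimplex.map (SimplexCategory.mkOfLe 0 i (Fin.zero_le i))).app m β, ?_⟩
    have hne : (i : ℕ) ≠ 0 := fun h => hi (by apply Fin.ext; simpa using h)
    refine ⟨(i : ℕ), by omega, i.is_le, fun j => ?_⟩
    have key : ∀ k : Fin 2,
        (((SimplexCategory.mkOfLe (0 : Fin (n + 1)) i (Fin.zero_le i)).toOrderHom k : Fin (n+1)) : ℕ) = 0 ∨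
        (((SimplexCategory.mkOfLe (0 : Fin (n + 1)) i (Fin.zero_le i)).toOrderHom k : Fin (n+1)) : ℕ) = i := by
      intro k
      match k with
      | 0 => left; rfl
      | 1 => right; rfl
    exact key _
  naturality m m' g := by
    ext β
    apply Subtype.ext
    exact ConcreteCategory.congr_hom ((SSet.stdSimplex.map
      (SimplexCategory.mkOfLe 0 i (Fin.zero_le i))).naturality g) β

variable (X : BSSet)

/-- Vertex component of the restriction along the edge `0 → 2` of `C₂` (the "numerator"). -/
def eF (w : vert (slash (coneSub 2).toFunctor X)) : vert (col 1 X) :=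
  (slashMap (coneEdge 2 2 (by decide)) X).app _ w

/-- Vertex component of the restriction along the edge `0 → 1` of `C₂` (the "denominator"). -/
def eG (w : vert (slash (coneSub 2).toFunctor X)) : vert (col 1 X) :=
  (slashMap (coneEdge 2 1 (by decide)) X).app _ w

/-- Vertex component of the face map `d_i : X_1 → X_0`. -/
def dV (i : Fin 2) (f : vert (col 1 X)) : vert (col 0 X) := (colδ i X).app _ f

/-- Vertex component of the degeneracy `s_0 : X_0 → X_1`; `oneV X x` is `1_x`. -/
def oneV (x : vert (col 0 X)) : vert (col 1 X) := (colσ 0 X).app _ x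

/-- The fraction operation determined by a section `μ₂` of the Bousfield map `β₂`:
`f/g := d₀ (μ₂ (f, g))`. -/
def fracV (μ₂ : slash (coneSub 2).toFunctor X ⟶ col 2 X)
    (w : vert (slash (coneSub 2).toFunctor X)) : vert (col 1 X) :=
  (colδ 0 X).app _ (μ₂.app _ w)

lemma dV_oneV (x : vert (col 0 X)) (i : Fin 2) : dV X i (oneV X x) = x := by
  have h : colσ (0 : Fin 1) X ≫ colδ i X = 𝟙 (col 0 X) := by
    rw [colδ, colσ]
    refine (slashMap_comp _ _ X).symm.trans ?_
    erw [← Functor.map_comp]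
    have : SimplexCategory.δ i ≫ SimplexCategory.σ (0 : Fin 1) = 𝟙 (SimplexCategory.mk 0) := by
      fin_cases i
      · exact SimplexCategory.δ_comp_σ_self
      · exact SimplexCategory.δ_comp_σ_succ
    rw [this]; erw [CategoryTheory.Functor.map_id, slashMap_id]; rfl
  exact ConcreteCategory.congr_hom (congrArg (fun (t : col 0 X ⟶ col 0 X) => t.app (op (SimplexCategory.mk 0)))
    h) x

/-- The identity morphism `1_x` as an element of the hom-space `X₁(x,x)`. -/
def idHom (x : vert (col 0 X)) :
    {f : vert (col 1 X) // dV X 1 f = x ∧ dV X 0 f = x} :=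
  ⟨oneV X x, dV_oneV X x 1, dV_oneV X x 0⟩


/-! ## Cellularity, pushouts of coproducts, finite compositions of pushouts -/

/-- `f` is a pushout (cobase change) of `g`. -/
def IsPushoutOf {C : Type*} [Category C] {A B X Y : C} (g : A ⟶ B) (f : X ⟶ Y) : Prop :=
  ∃ (u : A ⟶ X) (v : B ⟶ Y), IsPushout g u v f

/-- `f` is a pushout of a coproduct of maps belonging to the class `S`. -/
def IsPushoutOfCoproductOf (S : MorphismProperty SSet.{0}) {P Q : SSet.{0}} (f : P ⟶ Q) : Prop :=
  ∃ (ι : Type) (A B : ι → SSet.{0}) (g : ∀ i, A i ⟶ B i),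
    (∀ i, S (g i)) ∧
      IsPushoutOf (Limits.Sigma.desc (fun i => g i ≫ Limits.Sigma.ι B i) : (∐ A) ⟶ (∐ B)) f

/-- `f` is cellular with respect to the class `S`: it is a (transfinite, here `ℕ`-indexed)
composition of pushouts of coproducts of maps of `S`. -/
def IsCellularIn (S : MorphismProperty SSet.{0}) {X Y : SSet.{0}} (f : X ⟶ Y) : Prop :=
  ∃ (F : ℕ ⥤ SSet.{0}) (c : Cocone F) (_ : IsColimit c) (e₀ : F.obj 0 ≅ X) (e : c.pt ≅ Y),
    (∀ m : ℕ, IsPushoutOfCoproductOf S (F.map (homOfLE (Nat.le_succ m)))) ∧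
      f = e₀.inv ≫ c.ι.app 0 ≫ e.hom

/-- `f` is a finite composition of pushouts of `g`. -/
inductive FinCompPushoutsOf {A B : SSet.{0}} (g : A ⟶ B) : ∀ {X Y : SSet.{0}}, (X ⟶ Y) → Prop
| of {X Y : SSet.{0}} (f : X ⟶ Y) : IsPushoutOf g f → FinCompPushoutsOf g f
| comp {X Y Z : SSet.{0}} (f₁ : X ⟶ Y) (f₂ : Y ⟶ Z) :
      IsPushoutOf g f₁ → FinCompPushoutsOf g f₂ → FinCompPushoutsOf g (f₁ ≫ f₂)

/-! ## Lattice operations on subpresheaves -/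

variable {C : Type*} [Category C]

/-- Intersection of two subpresheaves. -/
def subInf {F : Cᵒᵖ ⥤ Type} (G G' : Subfunctor F) : Subfunctor F where
  obj U := G.obj U ∩ G'.obj U
  map i := fun _ hx => ⟨G.map i hx.1, G'.map i hx.2⟩

/-- Union of two subpresheaves. -/
def subSup {F : Cᵒᵖ ⥤ Type} (G G' : Subfunctor F) : Subfunctor F where
  obj U := G.obj U ∪ G'.obj U
  map i := by
    rintro x (hx | hx)
    · exact Or.inl (G.map i hx)
    · exact Or.inr (G'.map i hx)

lemma subInf_le_left {F : Cᵒᵖ ⥤ Type} (G G' : Subfunctor F) : subInf G G' ≤ G :=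
  fun _ => Set.inter_subset_left

lemma le_subSup_left {F : Cᵒᵖ ⥤ Type} (G G' : Subfunctor F) : G ≤ subSup G G' :=
  fun _ => Set.subset_union_left

/-! ## The coface `d¹` and the left cone -/

/-- The coface map `d¹ : Δ[n] → Δ[n+1]`. -/
def d1Map (n : ℕ) : (Δ[n] : SSet.{0}) ⟶ Δ[n + 1] :=
  SSet.stdSimplex.map (SimplexCategory.δ 1)

/-- The restriction of `d¹` to a map `C n → C (n+1) ∩ d¹[Δ[n]]`. -/
def coneToInter (n : ℕ) : ((coneSub n).toFunctor : SSet.{0}) ⟶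
    (subInf (coneSub (n + 1)) (Subfunctor.range (d1Map n))).toFunctor where
  app m := ↾fun α => by
    refine ⟨(d1Map n).app m α.1, ?_, ⟨α.1, rfl⟩⟩
    obtain ⟨i, hi1, hin, h⟩ := α.2
    refine ⟨i + 1, by omega, by omega, fun j => ?_⟩
    have key : stdSimplex.asOrderHom ((d1Map n).app m α.1) j
        = (1 : Fin (n + 2)).succAbove (stdSimplex.asOrderHom α.1 j) := rfl
    rcases h j with h' | h'
    · left
      have h0 : stdSimplex.asOrderHom α.1 j = 0 := by
        apply Fin.ext; exact h'
      rw [key, h0, Fin.succAbove_of_castSucc_lt]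
      · simp
      · simp
    · right
      rw [key, Fin.succAbove_of_le_castSucc]
      · simp [Fin.val_succ, h']
      · rw [Fin.le_def]
        simpa using by omega
  naturality m m' g := by
    ext α
    apply Subtype.ext
    exact ConcreteCategory.congr_hom ((d1Map n).naturality g) α.1

/-! ## Horizontally constant bisimplicial sets and closure properties -/

/-- `p₁* A`: the horizontally constant bisimplicial set with `(p₁* A)_{n,m} = A_n`. -/
def pHorizontal (A : SSet.{0}) : BSSet where
  obj nm := A.obj (op nm.unop.1)
  map f := A.map f.unop.1.op

/-- A class of maps of bisimplicial sets is stable under pullbacks. -/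
def StableUnderPullbacksB (F : MorphismProperty BSSet) : Prop :=
  ∀ ⦃W X Y Z : BSSet⦄ (p' : W ⟶ X) (f' : W ⟶ Z) (f : X ⟶ Y) (p : Z ⟶ Y),
    IsPullback p' f' f p → F f → F f'

/-- A class of maps of bisimplicial sets is stable under retracts. -/
def StableUnderRetractsB (F : MorphismProperty BSSet) : Prop :=
  ∀ ⦃X Y X' Y' : BSSet⦄ (f : X ⟶ Y) (g : X' ⟶ Y'), IsRetractOf f g → F g → F f

/-- A class of maps of bisimplicial sets is closed under sequential (inverse) limits:
limits of towers of arrows belonging to the class again belong to the class. -/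
def ClosedUnderSequentialLimitsB (F : MorphismProperty BSSet) : Prop :=
  ∀ (G : ℕᵒᵖ ⥤ Arrow BSSet), (∀ n : ℕᵒᵖ, F (G.obj n).hom) →
    ∀ (c : Cone G), IsLimit c → F c.pt.hom


/-! ### Auxiliary machinery for Statement 3 -/

section Statement3Aux

open SSet SimplexCategory

lemma val_succAbove {P : ℕ} (j : Fin (P + 2)) (x : Fin (P + 1)) :
    ((j.succAbove x : Fin (P + 2)) : ℕ) =
      if (x : ℕ) < (j : ℕ) then (x : ℕ) else (x : ℕ) + 1 := by
  rcases lt_or_ge ((x : ℕ)) ((j : ℕ)) with hx | hx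
  · rw [Fin.succAbove_of_castSucc_lt _ _ (by rw [Fin.lt_def, Fin.coe_castSucc]; exact hx),
      if_pos hx, Fin.coe_castSucc]
  · rw [Fin.succAbove_of_le_castSucc _ _ (by rw [Fin.le_def, Fin.coe_castSucc]; exact hx),
      if_neg (by omega), Fin.val_succ]

lemma val_predAbove {P : ℕ} (i : Fin (P + 1)) (x : Fin (P + 2)) :
    ((i.predAbove x : Fin (P + 1)) : ℕ) =
      if (i : ℕ) < (x : ℕ) then (x : ℕ) - 1 else (x : ℕ) := by
  rcases lt_or_ge ((i : ℕ)) ((x : ℕ)) with hx | hx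
  · rw [Fin.predAbove_of_castSucc_lt _ _ (by rw [Fin.lt_def, Fin.coe_castSucc]; exact hx),
      if_pos hx, Fin.coe_pred]
  · rw [Fin.predAbove_of_le_castSucc _ _ (by rw [Fin.le_def, Fin.coe_castSucc]; exact hx),
      if_neg (by omega), Fin.coe_castPred]

lemma simplex_ext {N : ℕ} {m : SimplexCategoryᵒᵖ} {α β : Δ[N].obj m}
    (h : ∀ v, (stdSimplex.asOrderHom α v : ℕ) = (stdSimplex.asOrderHom β v : ℕ)) : α = β := by
  apply stdSimplex.objEquiv.injective
  apply SimplexCategory.Hom.ext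
  apply OrderHom.ext
  funext v
  exact Fin.ext (h v)

/-- The subcomplex `C_N ∪ ∂_j ∪ ∂_{j+1} ∪ ⋯ ∪ ∂_N` of `Δ[N]`. -/
def subS (N j : ℕ) : Subfunctor (Δ[N] : SSet.{0}) where
  obj m := {α | (∃ i : ℕ, 1 ≤ i ∧ i ≤ N ∧
      ∀ v, (stdSimplex.asOrderHom α v : ℕ) = 0 ∨ (stdSimplex.asOrderHom α v : ℕ) = i)
    ∨ (∃ t : ℕ, j ≤ t ∧ t ≤ N ∧ ∀ v, (stdSimplex.asOrderHom α v : ℕ) ≠ t)}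
  map := by
    rintro m m' g α (⟨i, hi1, hiN, hv⟩ | ⟨t, ht1, htN, hv⟩)
    · exact Or.inl ⟨i, hi1, hiN, fun v => hv _⟩
    · exact Or.inr ⟨t, ht1, htN, fun v => hv _⟩

lemma subS_anti {N : ℕ} {j j' : ℕ} (h : j ≤ j') : subS N j' ≤ subS N j := by
  rintro m α (hc | ⟨t, ht1, htN, hv⟩)
  · exact Or.inl hc
  · exact Or.inr ⟨t, le_trans h ht1, htN, hv⟩

lemma subS_eq_coneSub {N j : ℕ} (hj : N + 1 ≤ j) : subS N j = coneSub N := by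
  apply Subfunctor.ext
  funext m
  ext α
  constructor
  · rintro (⟨i, h1, h2, hv⟩ | ⟨t, h1, h2, hv⟩)
    · exact ⟨i, h1, h2, hv⟩
    · omega
  · rintro ⟨i, h1, h2, hv⟩
    exact Or.inl ⟨i, h1, h2, hv⟩

lemma subS_two_eq {j : ℕ} (hj : 1 ≤ j) : subS 2 j = coneSub 2 := by
  apply Subfunctor.ext
  funext m
  ext α
  constructor
  · rintro (⟨i, h1, h2, hv⟩ | ⟨t, h1, h2, hv⟩)
    · exact ⟨i, h1, h2, hv⟩
    · refine ⟨3 - t, by omega, by omega, fun v => ?_⟩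
      have h3 := hv v
      have hb : (stdSimplex.asOrderHom α v : ℕ) < 3 := (stdSimplex.asOrderHom α v).isLt
      omega
  · rintro ⟨i, h1, h2, hv⟩
    exact Or.inl ⟨i, h1, h2, hv⟩

section Step

variable {P : ℕ} (i : Fin (P + 1))

/-- The `(i+1)`-st face map `Δ[P] ⟶ Δ[P+1]`. -/
def dMap : (Δ[P] : SSet.{0}) ⟶ Δ[P + 1] := SSet.stdSimplex.map (SimplexCategory.δ i.succ)

/-- The `i`-th degeneracy `Δ[P+1] ⟶ Δ[P]`. -/
def rMap : (Δ[P + 1] : SSet.{0}) ⟶ Δ[P] := SSet.stdSimplex.map (SimplexCategory.σ i)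

lemma dMap_val {m : SimplexCategoryᵒᵖ} (α : Δ[P].obj m) (v) :
    (stdSimplex.asOrderHom ((dMap i).app m α) v : ℕ) =
      if (stdSimplex.asOrderHom α v : ℕ) < (i : ℕ) + 1 then (stdSimplex.asOrderHom α v : ℕ)
      else (stdSimplex.asOrderHom α v : ℕ) + 1 := by
  have h0 : stdSimplex.asOrderHom ((dMap i).app m α) v = i.succ.succAbove (stdSimplex.asOrderHom α v) := rfl
  rw [h0, val_succAbove, Fin.val_succ]

lemma rMap_val {m : SimplexCategoryᵒᵖ} (β : Δ[P + 1].obj m) (v) :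
    (stdSimplex.asOrderHom ((rMap i).app m β) v : ℕ) =
      if (i : ℕ) < (stdSimplex.asOrderHom β v : ℕ) then (stdSimplex.asOrderHom β v : ℕ) - 1
      else (stdSimplex.asOrderHom β v : ℕ) := by
  have h0 : stdSimplex.asOrderHom ((rMap i).app m β) v = i.predAbove (stdSimplex.asOrderHom β v) := rfl
  rw [h0, val_predAbove]

lemma r_d {m : SimplexCategoryᵒᵖ} (α : Δ[P].obj m) :
    (rMap i).app m ((dMap i).app m α) = α := by
  have h : (dMap i) ≫ (rMap i) = 𝟙 _ := by
    rw [dMap, rMap]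
    erw [← Functor.map_comp]
    rw [SimplexCategory.δ_comp_σ_succ]
    erw [CategoryTheory.Functor.map_id]
  exact ConcreteCategory.congr_hom (NatTrans.congr_app h m) α

lemma d_r {m : SimplexCategoryᵒᵖ} (β : Δ[P + 1].obj m)
    (hβ : ∀ v, (stdSimplex.asOrderHom β v : ℕ) ≠ (i : ℕ) + 1) :
    (dMap i).app m ((rMap i).app m β) = β := by
  apply simplex_ext
  intro v
  have h1 := hβ v
  have h2 : (stdSimplex.asOrderHom β v : ℕ) < P + 2 := (stdSimplex.asOrderHom β v).isLt
  rw [dMap_val, rMap_val]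
  split_ifs <;> omega

lemma d_ne {m : SimplexCategoryᵒᵖ} (α : Δ[P].obj m) (v) :
    (stdSimplex.asOrderHom ((dMap i).app m α) v : ℕ) ≠ (i : ℕ) + 1 := by
  rw [dMap_val]
  split_ifs <;> omega

lemma d_mem₂ {m : SimplexCategoryᵒᵖ} {α : Δ[P].obj m}
    (hα : α ∈ (subS P ((i : ℕ) + 1)).obj m) :
    (dMap i).app m α ∈ (subS (P + 1) ((i : ℕ) + 2)).obj m := by
  obtain ⟨ii, h1, hN, hv⟩ | ⟨t, h1, hN, hv⟩ := hα
  · refine Or.inl ⟨if ii < (i : ℕ) + 1 then ii else ii + 1, by split_ifs <;> omega,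
      by split_ifs <;> omega, fun v => ?_⟩
    have h2 := hv v
    rw [dMap_val]
    split_ifs <;> omega
  · refine Or.inr ⟨t + 1, by omega, by omega, fun v => ?_⟩
    have h2 := hv v
    rw [dMap_val]
    split_ifs <;> omega

lemma of_d_mem {m : SimplexCategoryᵒᵖ} {α : Δ[P].obj m} (hP : 1 ≤ P)
    (hα : (dMap i).app m α ∈ (subS (P + 1) ((i : ℕ) + 2)).obj m) :
    α ∈ (subS P ((i : ℕ) + 1)).obj m := by
  obtain ⟨ii, h1, hN, hv⟩ | ⟨t, h1, hN, hv⟩ := hα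
  · by_cases hii : ii = (i : ℕ) + 1
    · refine Or.inl ⟨1, le_rfl, hP, fun v => ?_⟩
      have hb := dMap_val i α v
      have h2 := hv v
      have h3 := d_ne i α v
      split_ifs at hb <;> omega
    · rcases lt_or_gt_of_ne hii with hlt | hgt
      · refine Or.inl ⟨ii, h1, by omega, fun v => ?_⟩
        have hb := dMap_val i α v
        have h2 := hv v
        split_ifs at hb <;> omega
      · refine Or.inl ⟨ii - 1, by omega, by omega, fun v => ?_⟩
        have hb := dMap_val i α v
        have h2 := hv v
        split_ifs at hb <;> omega
  · refine Or.inr ⟨t - 1, by omega, by omega, fun v => ?_⟩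
    have hb := dMap_val i α v
    have h2 := hv v
    split_ifs at hb <;> omega

lemma d_mem₁ {m : SimplexCategoryᵒᵖ} (α : Δ[P].obj m) :
    (dMap i).app m α ∈ (subS (P + 1) ((i : ℕ) + 1)).obj m :=
  Or.inr ⟨(i : ℕ) + 1, le_rfl, by omega, d_ne i α⟩

lemma miss_of_not_mem {m : SimplexCategoryᵒᵖ} {β : Δ[P + 1].obj m}
    (h1 : β ∈ (subS (P + 1) ((i : ℕ) + 1)).obj m)
    (h2 : β ∉ (subS (P + 1) ((i : ℕ) + 2)).obj m) :
    ∀ v, (stdSimplex.asOrderHom β v : ℕ) ≠ (i : ℕ) + 1 := by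
  rcases h1 with hc | ⟨t, ht1, htN, hv⟩
  · exact absurd (Or.inl hc) h2
  · rcases eq_or_lt_of_le ht1 with rfl | hlt
    · exact hv
    · exact absurd (Or.inr ⟨t, hlt, htN, hv⟩) h2

/-- The top corner map of the attaching square. -/
def uMap : ((subS P ((i : ℕ) + 1)).toFunctor : SSet.{0}) ⟶
    (subS (P + 1) ((i : ℕ) + 2)).toFunctor where
  app m := ↾fun x => ⟨(dMap i).app m x.1, d_mem₂ i x.2⟩
  naturality m m' g := by
    ext x
    apply Subtype.ext
    exact NatTrans.naturality_apply (dMap i) g x.1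

/-- The left vertical map of the attaching square. -/
def vMap : (Δ[P] : SSet.{0}) ⟶ (subS (P + 1) ((i : ℕ) + 1)).toFunctor where
  app m := ↾fun α => ⟨(dMap i).app m α, d_mem₁ i α⟩
  naturality m m' g := by
    ext α
    apply Subtype.ext
    exact NatTrans.naturality_apply (dMap i) g α

lemma stepLe : subS (P + 1) ((i : ℕ) + 2) ≤ subS (P + 1) ((i : ℕ) + 1) :=
  subS_anti (by omega)

lemma sqStep : (subS P ((i : ℕ) + 1)).ι ≫ vMap i = uMap i ≫ Subfunctor.homOfLe (stepLe i) :=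
  rfl

end Step

end Statement3Aux
section Statement3Aux2

open SSet SimplexCategory CategoryTheory.Limits

variable {P : ℕ} (i : Fin (P + 1))

lemma inr_eq_inl (s : PushoutCocone ((subS P ((i : ℕ) + 1)).ι) (uMap i)) (hP : 1 ≤ P)
    {m : SimplexCategoryᵒᵖ} (β : Δ[P + 1].obj m)
    (hmiss : ∀ v, (stdSimplex.asOrderHom β v : ℕ) ≠ (i : ℕ) + 1)
    (h2 : β ∈ (subS (P + 1) ((i : ℕ) + 2)).obj m) :
    s.inr.app m ⟨β, h2⟩ = s.inl.app m ((rMap i).app m β) := by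
  have hd : (dMap i).app m ((rMap i).app m β) = β := d_r i β hmiss
  have hmem : (rMap i).app m β ∈ (subS P ((i : ℕ) + 1)).obj m :=
    of_d_mem i hP (by rw [hd]; exact h2)
  have hc := ConcreteCategory.congr_hom (NatTrans.congr_app s.condition m)
    (⟨(rMap i).app m β, hmem⟩ : (subS P ((i : ℕ) + 1)).toFunctor.obj m)
  have heq : (uMap i).app m ⟨(rMap i).app m β, hmem⟩ =
      (⟨β, h2⟩ : (subS (P + 1) ((i : ℕ) + 2)).toFunctor.obj m) := Subtype.ext hd
  calc s.inr.app m ⟨β, h2⟩ = s.inr.app m ((uMap i).app m ⟨(rMap i).app m β, hmem⟩) := by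
        rw [heq]
    _ = s.inl.app m ((rMap i).app m β) := hc.symm

open Classical in
/-- The descent map out of the step union. -/
noncomputable def descFun (hP : 1 ≤ P)
    (s : PushoutCocone ((subS P ((i : ℕ) + 1)).ι) (uMap i)) :
    ((subS (P + 1) ((i : ℕ) + 1)).toFunctor : SSet.{0}) ⟶ s.pt where
  app m := ↾fun x =>
    if h : (x : Δ[P + 1].obj m) ∈ (subS (P + 1) ((i : ℕ) + 2)).obj m then
      s.inr.app m ⟨(x : Δ[P + 1].obj m), h⟩
    else s.inl.app m ((rMap i).app m (x : Δ[P + 1].obj m))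
  naturality := by
    intro m m' g
    ext x
    obtain ⟨β, hβ⟩ := x
    show (if h : Δ[P + 1].map g β ∈ (subS (P + 1) ((i : ℕ) + 2)).obj m' then
        s.inr.app m' ⟨Δ[P + 1].map g β, h⟩
      else s.inl.app m' ((rMap i).app m' (Δ[P + 1].map g β))) =
      s.pt.map g (if h : β ∈ (subS (P + 1) ((i : ℕ) + 2)).obj m then
        s.inr.app m ⟨β, h⟩
      else s.inl.app m ((rMap i).app m β))
    by_cases h : β ∈ (subS (P + 1) ((i : ℕ) + 2)).obj m
    · rw [dif_pos (show Δ[P + 1].map g β ∈ (subS (P + 1) ((i : ℕ) + 2)).obj m' from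
        (subS (P + 1) ((i : ℕ) + 2)).map g h), dif_pos h]
      exact NatTrans.naturality_apply s.inr g ⟨β, h⟩
    · have hmiss : ∀ v, (stdSimplex.asOrderHom β v : ℕ) ≠ (i : ℕ) + 1 := miss_of_not_mem i hβ h
      rw [dif_neg h]
      by_cases h' : Δ[P + 1].map g β ∈ (subS (P + 1) ((i : ℕ) + 2)).obj m'
      · rw [dif_pos h']
        have hmiss' : ∀ v, (stdSimplex.asOrderHom (Δ[P + 1].map g β) v : ℕ) ≠ (i : ℕ) + 1 :=
          fun v => hmiss _
        rw [inr_eq_inl i s hP _ hmiss' h']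
        rw [NatTrans.naturality_apply (rMap i) g β]
        exact NatTrans.naturality_apply s.inl g ((rMap i).app m β)
      · rw [dif_neg h']
        rw [NatTrans.naturality_apply (rMap i) g β]
        exact NatTrans.naturality_apply s.inl g ((rMap i).app m β)

/-- The attaching square is a pushout. -/
noncomputable def stepIsColimit (hP : 1 ≤ P) :
    IsColimit (PushoutCocone.mk (vMap i) (Subfunctor.homOfLe (stepLe i)) (sqStep i)) := by
  refine PushoutCocone.IsColimit.mk _ (fun s => descFun i hP s) (fun s => ?_) (fun s => ?_)
    (fun s mm hl hr => ?_)
  · -- vMap ≫ desc = s.inl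
    classical
    apply NatTrans.ext; funext m; ext α
    show (if h : (dMap i).app m α ∈ (subS (P + 1) ((i : ℕ) + 2)).obj m then
        s.inr.app m ⟨(dMap i).app m α, h⟩
      else s.inl.app m ((rMap i).app m ((dMap i).app m α))) = s.inl.app m α
    by_cases h : (dMap i).app m α ∈ (subS (P + 1) ((i : ℕ) + 2)).obj m
    · rw [dif_pos h]
      have hmem : α ∈ (subS P ((i : ℕ) + 1)).obj m := of_d_mem i hP h
      have hc := ConcreteCategory.congr_hom (NatTrans.congr_app s.condition m)
        (⟨α, hmem⟩ : (subS P ((i : ℕ) + 1)).toFunctor.obj m)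
      exact hc.symm
    · rw [dif_neg h, r_d i α]
  · -- homOfLe ≫ desc = s.inr
    classical
    apply NatTrans.ext; funext m; ext x
    show (if h : (x : Δ[P + 1].obj m) ∈ (subS (P + 1) ((i : ℕ) + 2)).obj m then
        s.inr.app m ⟨(x : Δ[P + 1].obj m), h⟩
      else s.inl.app m ((rMap i).app m (x : Δ[P + 1].obj m))) = s.inr.app m x
    rw [dif_pos x.2]
    exact congrArg (s.inr.app m) (Subtype.ext rfl)
  · -- uniqueness
    classical
    apply NatTrans.ext; funext m; ext x
    obtain ⟨β, hβ⟩ := x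
    by_cases h : β ∈ (subS (P + 1) ((i : ℕ) + 2)).obj m
    · have e1 : mm.app m ⟨β, hβ⟩ = s.inr.app m ⟨β, h⟩ := by
        rw [← hr]; rfl
      refine e1.trans ?_
      show _ = (if h' : β ∈ (subS (P + 1) ((i : ℕ) + 2)).obj m then
        s.inr.app m ⟨β, h'⟩ else s.inl.app m ((rMap i).app m β))
      rw [dif_pos h]
    · have hmiss := miss_of_not_mem i hβ h
      have hd : (dMap i).app m ((rMap i).app m β) = β := d_r i β hmiss
      have e2 : (vMap i).app m ((rMap i).app m β) =
          (⟨β, hβ⟩ : (subS (P + 1) ((i : ℕ) + 1)).toFunctor.obj m) := Subtype.ext hd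
      have e3 : mm.app m ⟨β, hβ⟩ = s.inl.app m ((rMap i).app m β) := by
        rw [← e2, ← hl]; rfl
      refine e3.trans ?_
      show _ = (if h' : β ∈ (subS (P + 1) ((i : ℕ) + 2)).obj m then
        s.inr.app m ⟨β, h'⟩ else s.inl.app m ((rMap i).app m β))
      rw [dif_neg h]

lemma stepPushout (hP : 1 ≤ P) :
    IsPushout ((subS P ((i : ℕ) + 1)).ι) (uMap i) (vMap i)
      (Subfunctor.homOfLe (stepLe i)) :=
  IsPushout.of_isColimit (stepIsColimit i hP)

lemma step_mem (A : MorphismProperty SSet.{0}) (hA : IsSaturated A) (hP : 1 ≤ P)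
    (a b : ℕ) (ha : a = (i : ℕ) + 2) (hb : b = (i : ℕ) + 1)
    (hle : subS (P + 1) a ≤ subS (P + 1) b)
    (hcl : A ((subS P ((i : ℕ) + 1)).ι)) :
    A (Subfunctor.homOfLe hle) := by
  subst ha hb
  exact hA.pushout _ (uMap i) (vMap i) _ (stepPushout i hP) hcl

end Statement3Aux2
section Statement3Aux3

open SSet CategoryTheory.Limits

/-- The functor associated to a monotone chain of subpresheaves. -/
def chainFunctor {F : SSet.{0}} {k : ℕ} (G : Fin (k + 1) → Subfunctor F)
    (hG : Monotone G) : Fin (k + 1) ⥤ SSet.{0} where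
  obj p := (G p).toFunctor
  map {p q} f := Subfunctor.homOfLe (hG (leOfHom f))
  map_id _ := rfl
  map_comp _ _ := rfl

lemma chainA (A : MorphismProperty SSet.{0}) (hA : IsSaturated A) {F : SSet.{0}} {k : ℕ}
    (G : Fin (k + 1) → Subfunctor F) (hG : Monotone G)
    (hstep : ∀ p q : Fin (k + 1), (q : ℕ) = (p : ℕ) + 1 → ∀ hpq : G p ≤ G q,
      A (Subfunctor.homOfLe hpq))
    (X Y : Subfunctor F) (hX : X = G ⊥) (hY : Y = G (Fin.last k)) (hXY : X ≤ Y) :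
    A (Subfunctor.homOfLe hXY) := by
  subst hX hY
  have tX : IsTerminal (Fin.last k : Fin (k + 1)) :=
    IsTerminal.ofUniqueHom (fun p => homOfLE (Fin.le_last p))
      (fun _ _ => Subsingleton.elim _ _)
  have key := hA.transfinite (Fin (k + 1)) (inferInstanceAs (LinearOrder (Fin (k + 1))))
    (inferInstanceAs (SuccOrder (Fin (k + 1)))) (inferInstanceAs (OrderBot (Fin (k + 1))))
    (inferInstanceAs (WellFoundedLT (Fin (k + 1)))) (chainFunctor G hG)
    (coconeOfDiagramTerminal tX _) (colimitOfDiagramTerminal tX _) ?_ ?_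
  · exact key
  · intro p hp
    have hpk : (p : ℕ) < k := by
      rcases lt_or_eq_of_le (Nat.lt_succ_iff.mp p.isLt) with hlt | heq
      · exact hlt
      · exact absurd (fun b _ => by rw [Fin.le_def]; omega) hp
    have h1 : p < Order.succ p := Order.lt_succ_of_not_isMax hp
    have h2 : Order.succ p ≤ (⟨(p : ℕ) + 1, by omega⟩ : Fin (k + 1)) :=
      Order.succ_le_of_lt (by rw [Fin.lt_def]; exact Nat.lt_succ_self _)
    have hv : ((Order.succ p : Fin (k + 1)) : ℕ) = (p : ℕ) + 1 := by
      rw [Fin.lt_def] at h1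
      rw [Fin.le_def] at h2
      exact le_antisymm h2 h1
    exact hstep p (Order.succ p) hv (hG (Order.le_succ p))
  · intro p hp
    exfalso
    have h0 : 0 < (p : ℕ) := by
      rcases Nat.eq_zero_or_pos (p : ℕ) with h | h
      · exact absurd (fun b _ => by rw [Fin.le_def]; omega) hp.1
      · exact h
    have hlt : p.isLt = p.isLt := rfl
    exact hp.2 ⟨(p : ℕ) - 1, by omega⟩
      ⟨by rw [Fin.lt_def]; show (p : ℕ) - 1 < (p : ℕ); omega,
       fun c hc1 hc2 => by
        rw [Fin.lt_def] at hc1 hc2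
        have : ((⟨(p : ℕ) - 1, by omega⟩ : Fin (k + 1)) : ℕ) = (p : ℕ) - 1 := rfl
        omega⟩

lemma chainDown (A : MorphismProperty SSet.{0}) (hA : IsSaturated A) (P j : ℕ)
    (hP : 1 ≤ P) (hj : 1 ≤ j) (hjP : j ≤ P + 2)
    (hcl : ∀ t : ℕ, j ≤ t → t ≤ P + 1 → A ((subS P t).ι))
    (Y : Subfunctor (Δ[P + 1] : SSet.{0})) (hY : Y = subS (P + 1) j)
    (hle : subS (P + 1) (P + 2) ≤ Y) :
    A (Subfunctor.homOfLe hle) := by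
  subst hY
  set k := P + 2 - j with hk
  have hmono : Monotone (fun q : Fin (k + 1) => subS (P + 1) (P + 2 - (q : ℕ))) := by
    intro p q hpq
    rw [Fin.le_def] at hpq
    exact subS_anti (by omega)
  refine chainA A hA _ hmono ?_ (subS (P + 1) (P + 2)) (subS (P + 1) j) ?_ ?_ hle
  · intro p q hpq hle'
    have hqk : (q : ℕ) < k + 1 := q.isLt
    have hpk : (p : ℕ) ≤ P := by omega
    refine step_mem (⟨P - (p : ℕ), by omega⟩ : Fin (P + 1)) A hA hP _ _ ?_ ?_ hle' ?_
    · show P + 2 - (p : ℕ) = (P - (p : ℕ)) + 2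
      omega
    · show P + 2 - (q : ℕ) = (P - (p : ℕ)) + 1
      omega
    · exact hcl (P - (p : ℕ) + 1) (by omega) (by omega)
  · have hb : ((⊥ : Fin (k + 1)) : ℕ) = 0 := rfl
    rw [hb]
    congr 1
  · rw [Fin.val_last]
    congr 1
    omega

end Statement3Aux3
section Statement3Aux4

open SSet CategoryTheory.Limits

lemma mono_homOfLe {F : SSet.{0}} {G G' : Subfunctor F} (hgg : G ≤ G') :
    Mono (Subfunctor.homOfLe hgg) :=
  inferInstanceAs (Mono (C := SimplexCategoryᵒᵖ ⥤ Type 0) (Subfunctor.homOfLe hgg))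

lemma mono_ι {F : SSet.{0}} (G : Subfunctor F) : Mono G.ι :=
  inferInstanceAs (Mono (C := SimplexCategoryᵒᵖ ⥤ Type 0) G.ι)

lemma claimA (A : MorphismProperty SSet.{0}) (hA : IsSaturated A) (hrc : RightCancel A)
    (n : ℕ) (h : ∀ m : ℕ, 2 ≤ m → m < n → A ((coneSub m).ι)) :
    ∀ M, 2 ≤ M → M < n → ∀ jj, 1 ≤ jj → A ((subS M jj).ι) := by
  intro M hM2
  induction M, hM2 using Nat.le_induction with
  | base =>
    intro hMn jj hjj
    rw [subS_two_eq hjj]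
    exact h 2 le_rfl hMn
  | succ M hM IH =>
    intro hMn jj hjj
    by_cases hjM : M + 2 ≤ jj
    · rw [subS_eq_coneSub hjM]
      exact h (M + 1) (by omega) hMn
    · have hle : subS (M + 1) (M + 2) ≤ subS (M + 1) jj := subS_anti (by omega)
      have hu : A (Subfunctor.homOfLe hle) :=
        chainDown A hA M jj (by omega) hjj (by omega)
          (fun t ht1 ht2 => IH (by omega) t (by omega)) _ rfl hle
      have hcone : A ((subS (M + 1) (M + 2)).ι) := by
        rw [subS_eq_coneSub le_rfl]
        exact h (M + 1) (by omega) hMn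
      refine hrc (Subfunctor.homOfLe hle) ((subS (M + 1) jj).ι)
        (mono_homOfLe hle) (mono_ι _) ?_ hu
      rw [Subfunctor.homOfLe_ι]
      exact hcone

/-- The cone subcomplex agrees with `subS n (n+1)`. -/
def coneIso (N : ℕ) : ((coneSub N).toFunctor : SSet.{0}) ≅ (subS N (N + 1)).toFunctor where
  hom :=
    { app := fun m => ↾fun x => ⟨x.1, Or.inl x.2⟩
      naturality := fun m m' g => by ext x; apply Subtype.ext; rfl }
  inv :=
    { app := fun m => ↾fun x => ⟨x.1, by
        rcases x.2 with hc | ⟨t, ht1, ht2, _⟩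
        · exact hc
        · omega⟩
      naturality := fun m m' g => by ext x; apply Subtype.ext; rfl }
  hom_inv_id := by apply NatTrans.ext; funext m; ext x; apply Subtype.ext; rfl
  inv_hom_id := by apply NatTrans.ext; funext m; ext x; apply Subtype.ext; rfl

lemma subS_one_mem_horn {N : ℕ} (hN : 2 ≤ N) {m : SimplexCategoryᵒᵖ} {α : Δ[N].obj m}
    (hα : α ∈ (subS N 1).obj m) :
    Set.range (stdSimplex.asOrderHom α) ∪ {(0 : Fin (N + 1))} ≠ Set.univ := by
  intro hu
  rw [Set.eq_univ_iff_forall] at hu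
  rcases hα with ⟨i, h1, h2, hv⟩ | ⟨t, h1, h2, hv⟩
  · obtain ⟨w, hw1, hw2, hw3⟩ : ∃ w : ℕ, 1 ≤ w ∧ w ≤ N ∧ w ≠ i := by
      rcases eq_or_ne i 1 with rfl | hne
      · exact ⟨2, by omega, hN, by omega⟩
      · exact ⟨1, le_rfl, by omega, fun e => hne e.symm⟩
    rcases hu ⟨w, by omega⟩ with ⟨v, hv'⟩ | h0
    · have hval := congrArg Fin.val hv'
      simp only [] at hval
      rcases hv v with h' | h' <;> simp_all
    · have hval := congrArg Fin.val (Set.mem_singleton_iff.mp h0)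
      simp_all
  · rcases hu ⟨t, by omega⟩ with ⟨v, hv'⟩ | h0
    · exact hv v (congrArg Fin.val hv')
    · have hval := congrArg Fin.val (Set.mem_singleton_iff.mp h0)
      simp_all

lemma horn_mem_subS_one {N : ℕ} {m : SimplexCategoryᵒᵖ} {α : Δ[N].obj m}
    (hα : Set.range (stdSimplex.asOrderHom α) ∪ {(0 : Fin (N + 1))} ≠ Set.univ) :
    α ∈ (subS N 1).obj m := by
  rw [Set.ne_univ_iff_exists_notMem] at hα
  obtain ⟨w, hw⟩ := hα
  simp only [Set.mem_union, Set.mem_range, Set.mem_singleton_iff, not_or, not_exists] at hw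
  have hw0 : (w : ℕ) ≠ 0 := fun e => hw.2 (Fin.ext e)
  exact Or.inr ⟨(w : ℕ), by omega, Fin.is_le w, fun v hv => hw.1 v (Fin.ext hv)⟩

/-- The horn `Λ[N,0]` agrees with `subS N 1`. -/
def hornIso (N : ℕ) (hN : 2 ≤ N) : (Λ[N, 0] : SSet.{0}) ≅ (subS N 1).toFunctor where
  hom :=
    { app := fun m => ↾fun x => ⟨x.1, horn_mem_subS_one x.2⟩
      naturality := fun m m' g => by ext x; apply Subtype.ext; rfl }
  inv :=
    { app := fun m => ↾fun x => ⟨x.1, subS_one_mem_horn hN x.2⟩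
      naturality := fun m m' g => by ext x; apply Subtype.ext; rfl }
  hom_inv_id := by apply NatTrans.ext; funext m; ext x; apply Subtype.ext; rfl
  inv_hom_id := by apply NatTrans.ext; funext m; ext x; apply Subtype.ext; rfl

end Statement3Aux4

/-- Fix `n ≥ 2` and let `A` be a saturated class of morphisms of simplicial
sets with the right cancellation property for monomorphisms which contains the left cone
inclusions `c_m` for all `2 ≤ m < n`. Then the canonical inclusion `k_n : C_n → Λ[n,0]`
belongs to `A`. -/
theorem coneToHorn_mem (A : MorphismProperty SSet.{0})
    (hA : IsSaturated A) (hrc : RightCancel A) (n : ℕ) (hn : 2 ≤ n)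
    (h : ∀ m : ℕ, 2 ≤ m → m < n → A ((coneSub m).ι)) :
    A (coneToHorn n hn) := by
  have hle : subS n (n + 1) ≤ subS n 1 := subS_anti (by omega)
  have hmain : A (Subfunctor.homOfLe hle) := by
    rcases eq_or_lt_of_le hn with h2 | h3
    · -- n = 2
      subst h2
      exact chainDown A hA 1 3 le_rfl (by omega) (by omega)
        (fun t ht1 ht2 => by omega) _
        (by rw [subS_two_eq le_rfl, subS_two_eq (by omega : (1:ℕ) ≤ 3)]) hle
    · -- n ≥ 3
      obtain ⟨P, rfl⟩ : ∃ P, n = P + 1 := ⟨n - 1, by omega⟩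
      exact chainDown A hA P 1 (by omega) le_rfl (by omega)
        (fun t ht1 ht2 => claimA A hA hrc (P + 1) h P (by omega) (by omega) t ht1) _ rfl hle
  have e : Arrow.mk (coneToHorn n hn) ≅ Arrow.mk (Subfunctor.homOfLe hle) := by
    refine Arrow.isoMk (coneIso n) (hornIso n hn) ?_
    apply NatTrans.ext; funext m; ext x
    apply Subtype.ext
    rfl
  exact hA.retract _ _ ⟨e.hom, e.inv, e.hom_inv_id⟩ hmain

end BousfieldPaper
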